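/- Let B be a real symmetric positive definite 3×3 matrix. Then for every nonzero real symmetric 3×3 matrix M, M:ℂ(B):M > 0; consequently the linear map M ↦ ℂ(B):M on the space of real symmetric 3×3 matrices is injective (hence invertible). -/

import Mathlib

open Matrix MeasureTheory

noncomputable section

/-- 3×3 real matrices. -/
abbrev Mat3 := Matrix (Fin 3) (Fin 3) ℝ

/-- Rank-4 tensors on ℝ³. -/
abbrev Tens4 := Fin 3 → Fin 3 → Fin 3 → Fin 3 → ℝ

/-- Tensor (outer) product of two matrices: `(K ⊗ L)_{ijkl} = K_{ij} L_{kl}`. -/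
def otimes (K L : Mat3) : Tens4 := fun i j k l => K i j * L k l

/-- Symmetrization of a rank-4 tensor: the average over all 24 permutations of the indices. -/
def symmetrize (T : Tens4) : Tens4 := fun i j k l =>
  (∑ σ : Equiv.Perm (Fin 4),
      T (![i, j, k, l] (σ 0)) (![i, j, k, l] (σ 1)) (![i, j, k, l] (σ 2)) (![i, j, k, l] (σ 3)))
    / 24

/-- Contraction of a rank-4 tensor with a matrix: `(𝔹:M)_{ij} = Σ_{k,l} 𝔹_{ijkl} M_{kl}`. -/
def contr (T : Tens4) (M : Mat3) : Mat3 :=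
  Matrix.of fun i j => ∑ k, ∑ l, T i j k l * M k l

/-- Full contraction `N:𝔹:M = Σ_{i,j,k,l} N_{ij} 𝔹_{ijkl} M_{kl}`. -/
def dcontr (N : Mat3) (T : Tens4) (M : Mat3) : ℝ :=
  ∑ i, ∑ j, ∑ k, ∑ l, N i j * T i j k l * M k l

/-- The matrix `(B + s·I)⁻¹` (matrix inverse). -/
def res (B : Mat3) (s : ℝ) : Mat3 := (B + s • (1 : Mat3))⁻¹

/-- `A(B) = (1/2)·∫₀^∞ (B + s·I)⁻¹ / √(det(B + s·I)) ds`, entrywise. -/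
def Amat (B : Mat3) : Mat3 :=
  Matrix.of fun i j =>
    (1 / 2) * ∫ s in Set.Ioi (0 : ℝ),
      res B s i j / Real.sqrt (B + s • (1 : Mat3)).det

/-- `𝔸(B) = (3/4)·∫₀^∞ s·S((B+sI)⁻¹ ⊗ (B+sI)⁻¹) / √(det(B+sI)) ds`, entrywise. -/
def Atens (B : Mat3) : Tens4 := fun i j k l =>
  (3 / 4) * ∫ s in Set.Ioi (0 : ℝ),
    s * symmetrize (otimes (res B s) (res B s)) i j k l
      / Real.sqrt (B + s • (1 : Mat3)).det

/-- `ℂ(B) = (3/4)·∫₀^∞ S((B+sI)⁻¹ ⊗ (B+sI)⁻¹) / √(det(B+sI)) ds`, entrywise. -/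
def Ctens (B : Mat3) : Tens4 := fun i j k l =>
  (3 / 4) * ∫ s in Set.Ioi (0 : ℝ),
    symmetrize (otimes (res B s) (res B s)) i j k l
      / Real.sqrt (B + s • (1 : Mat3)).det

end

/-! ### Auxiliary lemmas -/

open Equiv in
/-- An explicit enumeration of the 24 permutations of `Fin 4`. -/
def permList : List (Equiv.Perm (Fin 4)) :=
  [1, swap 0 1, swap 0 2, swap 0 3, swap 1 2, swap 1 3, swap 2 3,
   swap 0 1 * swap 0 2, swap 0 1 * swap 0 3, swap 0 1 * swap 1 2, swap 0 1 * swap 1 3,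
   swap 0 1 * swap 2 3, swap 0 2 * swap 0 3, swap 0 2 * swap 1 3, swap 0 2 * swap 2 3,
   swap 0 3 * swap 1 2, swap 1 2 * swap 1 3, swap 1 2 * swap 2 3,
   swap 0 1 * swap 0 2 * swap 0 3, swap 0 1 * swap 0 2 * swap 1 3,
   swap 0 1 * swap 0 2 * swap 2 3, swap 0 1 * swap 0 3 * swap 1 2,
   swap 0 1 * swap 1 2 * swap 1 3, swap 0 1 * swap 1 2 * swap 2 3]

lemma permList_nodup : permList.Nodup := by decide

lemma permList_univ : permList.toFinset = Finset.univ := by decide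

/-- Closed form of the symmetrization of `R ⊗ R` for a symmetric matrix `R`. -/
lemma symmetrize_otimes (R : Mat3) (hR : ∀ a b, R a b = R b a) (i j k l : Fin 3) :
    symmetrize (otimes R R) i j k l
      = (R i j * R k l + R i k * R j l + R i l * R j k) / 3 := by
  have h : (Finset.univ : Finset (Equiv.Perm (Fin 4))).sum
      (fun σ => otimes R R (![i, j, k, l] (σ 0)) (![i, j, k, l] (σ 1)) (![i, j, k, l] (σ 2))
        (![i, j, k, l] (σ 3)))
      = (permList.map (fun σ => otimes R R (![i, j, k, l] (σ 0)) (![i, j, k, l] (σ 1))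
        (![i, j, k, l] (σ 2)) (![i, j, k, l] (σ 3)))).sum := by
    rw [← permList_univ, List.sum_toFinset _ permList_nodup]
  rw [symmetrize, h]
  simp only [permList, List.map_cons, List.map_nil, List.sum_cons, List.sum_nil, otimes]
  simp (config := { decide := true }) only [Equiv.Perm.one_apply, Equiv.Perm.mul_apply,
    Equiv.swap_apply_def, Matrix.cons_val_zero, Matrix.cons_val_one, Matrix.head_cons,
    Matrix.cons_val_two, Matrix.tail_cons, Matrix.cons_val_three, Matrix.cons_val_fin_one,
    reduceIte]
  rw [hR j i, hR k i, hR l i, hR k j, hR l j, hR l k]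
  ring

set_option maxHeartbeats 2000000 in
/-- The key algebraic identity behind positivity. -/
lemma key_alg (U M R : Mat3) (c : Fin 3 → ℝ) (hM : ∀ a b, M a b = M b a)
    (hR : ∀ a b, R a b = ∑ k, U a k * c k * U b k) :
    ∑ i, ∑ j, ∑ k, ∑ l, (M i j * M k l) * (R i j * R k l + R i k * R j l + R i l * R j k)
      = (∑ i, ∑ j, M i j * R i j) ^ 2
        + 2 * ∑ a, ∑ b, (c a * c b) * (∑ i, ∑ j, U i a * M i j * U j b) ^ 2 := by
  simp only [hR, Fin.sum_univ_three]
  rw [hM 1 0, hM 2 0, hM 2 1]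
  ring

/-- Real spectral decomposition of a positive-definite 3×3 matrix, shifted by `s`. -/
lemma exists_spectral (B : Mat3) (hB : B.PosDef) :
    ∃ (U : Mat3) (μ : Fin 3 → ℝ), U * Uᵀ = 1 ∧ Uᵀ * U = 1 ∧ (∀ k, 0 < μ k) ∧
      (∀ s : ℝ, B + s • (1 : Mat3) = U * diagonal (fun k => μ k + s) * Uᵀ) := by
  have hH : B.IsHermitian := hB.1
  have h1 : (hH.eigenvectorUnitary : Mat3) * (hH.eigenvectorUnitary : Mat3)ᵀ = 1 := by
    have := (Matrix.mem_unitaryGroup_iff).mp (hH.eigenvectorUnitary).2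
    simpa [Matrix.star_eq_conjTranspose, Matrix.conjTranspose_eq_transpose_of_trivial] using this
  have h2 : (hH.eigenvectorUnitary : Mat3)ᵀ * (hH.eigenvectorUnitary : Mat3) = 1 := by
    have := (Matrix.mem_unitaryGroup_iff').mp (hH.eigenvectorUnitary).2
    simpa [Matrix.star_eq_conjTranspose, Matrix.conjTranspose_eq_transpose_of_trivial] using this
  refine ⟨(hH.eigenvectorUnitary : Mat3), hH.eigenvalues, h1, h2, hB.eigenvalues_pos, ?_⟩
  intro s
  have hsp' : B = (hH.eigenvectorUnitary : Mat3) * diagonal hH.eigenvalues *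
      (hH.eigenvectorUnitary : Mat3)ᵀ := by
    have hsp := hH.spectral_theorem
    simpa [Matrix.star_eq_conjTranspose, Matrix.conjTranspose_eq_transpose_of_trivial] using hsp
  have hd : (diagonal fun k => hH.eigenvalues k + s) =
      diagonal hH.eigenvalues + s • (1 : Mat3) := by
    rw [Matrix.smul_one_eq_diagonal, Matrix.diagonal_add]
  rw [hd, Matrix.mul_add, Matrix.add_mul, ← hsp', Matrix.mul_smul, Matrix.smul_mul,
    Matrix.mul_one, h1]

lemma prod_diag_apply (U : Mat3) (d : Fin 3 → ℝ) (a b : Fin 3) :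
    (U * diagonal d * Uᵀ) a b = ∑ k, U a k * d k * U b k := by
  rw [Matrix.mul_apply]
  simp [Matrix.mul_diagonal, Matrix.transpose_apply]

lemma UNU (U M : Mat3) (a b : Fin 3) :
    (Uᵀ * M * U) a b = ∑ i, ∑ j, U i a * M i j * U j b := by
  simp only [Matrix.mul_apply, Matrix.transpose_apply, Finset.sum_mul]
  rw [Finset.sum_comm]

theorem Ctens_posDef_and_injective (B : Mat3) (hB : B.PosDef) :
    (∀ M : Mat3, Mᵀ = M → M ≠ 0 → 0 < dcontr M (Ctens B) M)
      ∧ Set.InjOn (fun M => contr (Ctens B) M) {M : Mat3 | Mᵀ = M} := by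
  obtain ⟨U, μ, hU1, hU2, hμ, hBs⟩ := exists_spectral B hB
  set lam : ℝ := min (min (μ 0) (μ 1)) (μ 2) with hlamdef
  have hlam0 : 0 < lam := lt_min (lt_min (hμ 0) (hμ 1)) (hμ 2)
  have hlamle : ∀ k, lam ≤ μ k := by
    intro k
    fin_cases k
    · exact (min_le_left _ _).trans (min_le_left _ _)
    · exact (min_le_left _ _).trans (min_le_right _ _)
    · exact min_le_right _ _
  -- determinant formula and bounds
  have hdet : ∀ s : ℝ, (B + s • (1 : Mat3)).det = ∏ k, (μ k + s) := by
    intro s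
    have hdU : U.det * U.det = 1 := by
      have := congrArg Matrix.det hU1
      rwa [Matrix.det_mul, Matrix.det_transpose, Matrix.det_one] at this
    rw [hBs s, Matrix.det_mul, Matrix.det_mul, Matrix.det_transpose, Matrix.det_diagonal,
      mul_right_comm, hdU, one_mul]
  set c0 : ℝ := Real.sqrt (lam ^ 3) with hc0def
  have hc0 : 0 < c0 := Real.sqrt_pos.mpr (pow_pos hlam0 3)
  have hdetge : ∀ s : ℝ, 0 ≤ s → c0 ≤ Real.sqrt (B + s • (1 : Mat3)).det := by
    intro s hs
    rw [hdet s]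
    apply Real.sqrt_le_sqrt
    calc lam ^ 3 = ∏ _k : Fin 3, lam := by simp [pow_succ]; try ring
    _ ≤ ∏ k, (μ k + s) :=
      Finset.prod_le_prod (fun k _ => hlam0.le)
        (fun k _ => le_add_of_le_of_nonneg (hlamle k) hs)
  have hdetpos : ∀ s : ℝ, 0 ≤ s → 0 < Real.sqrt (B + s • (1 : Mat3)).det := by
    intro s hs
    rw [hdet s]
    exact Real.sqrt_pos.mpr (Finset.prod_pos fun k _ =>
      add_pos_of_pos_of_nonneg (hμ k) hs)
  -- resolvent formula
  have hres : ∀ s : ℝ, 0 ≤ s →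
      res B s = U * diagonal (fun k => (μ k + s)⁻¹) * Uᵀ := by
    intro s hs
    apply Matrix.inv_eq_right_inv
    rw [hBs s]
    have key : (U * diagonal (fun k => μ k + s) * Uᵀ) *
        (U * diagonal (fun k => (μ k + s)⁻¹) * Uᵀ)
        = U * diagonal (fun k => (μ k + s) * (μ k + s)⁻¹) * Uᵀ := by
      simp only [Matrix.mul_assoc]
      rw [← Matrix.mul_assoc Uᵀ U, hU2, Matrix.one_mul,
        ← Matrix.mul_assoc (diagonal _) (diagonal _), Matrix.diagonal_mul_diagonal]
    rw [key]
    have : (fun k => (μ k + s) * (μ k + s)⁻¹) = fun _ => (1:ℝ) := by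
      funext k; exact mul_inv_cancel₀ (ne_of_gt (add_pos_of_pos_of_nonneg (hμ k) hs))
    rw [this, Matrix.diagonal_one, Matrix.mul_one, hU1]
  have hresE : ∀ s : ℝ, 0 ≤ s → ∀ a b, res B s a b = ∑ k, U a k * (μ k + s)⁻¹ * U b k := by
    intro s hs a b
    rw [hres s hs, prod_diag_apply]
  have hressym : ∀ s : ℝ, 0 ≤ s → ∀ a b, res B s a b = res B s b a := by
    intro s hs a b
    rw [hresE s hs a b, hresE s hs b a]
    exact Finset.sum_congr rfl fun k _ => by ring
  -- entry bounds
  have hUbd : ∀ a k, |U a k| ≤ 1 := by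
    have hdiag : ∀ a, (∑ k, U a k * U a k) = 1 := by
      intro a
      have := congrFun (congrFun hU1 a) a
      simpa [Matrix.mul_apply, Matrix.transpose_apply, Matrix.one_apply] using this
    intro a k
    have h1 : U a k * U a k ≤ 1 := by
      rw [← hdiag a]
      exact Finset.single_le_sum (f := fun k => U a k * U a k)
        (fun i _ => mul_self_nonneg _) (Finset.mem_univ k)
    exact abs_le.mpr ⟨by nlinarith, by nlinarith⟩
  have hresbd : ∀ s : ℝ, 0 ≤ s → ∀ a b, |res B s a b| ≤ 3 * (lam + s)⁻¹ := by
    intro s hs a b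
    rw [hresE s hs a b]
    have hls : 0 < lam + s := add_pos_of_pos_of_nonneg hlam0 hs
    calc |∑ k, U a k * (μ k + s)⁻¹ * U b k| ≤ ∑ k, |U a k * (μ k + s)⁻¹ * U b k| :=
          Finset.abs_sum_le_sum_abs _ _
    _ ≤ ∑ _k : Fin 3, (lam + s)⁻¹ := by
        apply Finset.sum_le_sum
        intro k _
        rw [abs_mul, abs_mul]
        have h3 : |(μ k + s)⁻¹| ≤ (lam + s)⁻¹ := by
          rw [abs_of_pos (inv_pos.mpr (add_pos_of_pos_of_nonneg (hμ k) hs))]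
          exact inv_anti₀ hls (add_le_add_left (hlamle k) s)
        calc |U a k| * |(μ k + s)⁻¹| * |U b k| ≤ 1 * (lam + s)⁻¹ * 1 :=
              mul_le_mul (mul_le_mul (hUbd a k) h3 (abs_nonneg _) zero_le_one)
                (hUbd b k) (abs_nonneg _) (by positivity)
        _ = (lam + s)⁻¹ := by ring
    _ = 3 * (lam + s)⁻¹ := by simp [Finset.sum_const]; try ring
  -- the integrand
  set h : Fin 3 → Fin 3 → Fin 3 → Fin 3 → ℝ → ℝ := fun i j k l s =>
    symmetrize (otimes (res B s) (res B s)) i j k l / Real.sqrt (B + s • (1 : Mat3)).det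
    with hhdef
  have hhbd : ∀ i j k l, ∀ s : ℝ, 0 ≤ s →
      |h i j k l s| ≤ (27 * (lam + s)⁻¹ ^ 2) / c0 := by
    intro i j k l s hs
    have hnum : |symmetrize (otimes (res B s) (res B s)) i j k l| ≤ 27 * (lam + s)⁻¹ ^ 2 := by
      rw [symmetrize_otimes (res B s) (hressym s hs) i j k l]
      have hp : ∀ a b c d : Fin 3, |res B s a b * res B s c d| ≤ 9 * (lam + s)⁻¹ ^ 2 := by
        intro a b c d
        rw [abs_mul]
        have hls : (0:ℝ) ≤ 3 * (lam + s)⁻¹ := by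
          positivity
        calc |res B s a b| * |res B s c d| ≤ (3 * (lam + s)⁻¹) * (3 * (lam + s)⁻¹) :=
              mul_le_mul (hresbd s hs a b) (hresbd s hs c d) (abs_nonneg _) hls
        _ = 9 * (lam + s)⁻¹ ^ 2 := by ring
      have := abs_add_three (res B s i j * res B s k l) (res B s i k * res B s j l)
        (res B s i l * res B s j k)
      rw [abs_div]
      have h9 : |res B s i j * res B s k l + res B s i k * res B s j l +
          res B s i l * res B s j k| ≤ 27 * (lam + s)⁻¹ ^ 2 := by
        calc _ ≤ _ := this
        _ ≤ 9 * (lam + s)⁻¹ ^ 2 + 9 * (lam + s)⁻¹ ^ 2 + 9 * (lam + s)⁻¹ ^ 2 :=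
            add_le_add (add_le_add (hp i j k l) (hp i k j l)) (hp i l j k)
        _ = 27 * (lam + s)⁻¹ ^ 2 := by ring
      rw [show |(3:ℝ)| = 3 by norm_num]
      have ht : (0:ℝ) ≤ (lam + s)⁻¹ ^ 2 := by positivity
      linarith
    rw [hhdef]
    simp only []
    rw [abs_div, abs_of_pos (hdetpos s hs)]
    exact div_le_div₀ (by positivity) hnum hc0 (hdetge s hs)
  -- integrability of the dominating function
  have hgmeas : Measurable (fun s : ℝ => (27 * (lam + s)⁻¹ ^ 2) / c0) := by
    apply Measurable.div _ measurable_const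
    exact (measurable_const.mul (((measurable_const.add measurable_id).inv).pow_const 2))
  have hgint : IntegrableOn (fun s : ℝ => (27 * (lam + s)⁻¹ ^ 2) / c0) (Set.Ioi 0) := by
    have h1 : IntegrableOn (fun s : ℝ => (27 * (lam + s)⁻¹ ^ 2) / c0) (Set.Ioc 0 1) := by
      apply Integrable.mono' (g := fun _ : ℝ => (27 * lam⁻¹ ^ 2) / c0)
      · exact integrableOn_const measure_Ioc_lt_top.ne
      · exact hgmeas.aestronglyMeasurable
      · refine (ae_restrict_iff' measurableSet_Ioc).2 (Filter.Eventually.of_forall ?_)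
        intro s hs
        have hs0 : 0 < s := hs.1
        have hll : 0 < lam + s := by linarith
        have hinv : (lam + s)⁻¹ ≤ lam⁻¹ := inv_anti₀ hlam0 (by linarith)
        have hinv0 : 0 ≤ (lam + s)⁻¹ := by positivity
        rw [Real.norm_eq_abs, abs_of_nonneg (by positivity)]
        exact div_le_div₀ (by positivity) (by nlinarith) hc0 le_rfl
    have h2 : IntegrableOn (fun s : ℝ => (27 * (lam + s)⁻¹ ^ 2) / c0) (Set.Ioi 1) := by
      apply Integrable.mono' (g := fun s : ℝ => (27 / c0) * s ^ (-2 : ℝ))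
      · exact ((integrableOn_Ioi_rpow_of_lt (by norm_num) one_pos).const_mul _)
      · exact hgmeas.aestronglyMeasurable
      · refine (ae_restrict_iff' measurableSet_Ioi).2 (Filter.Eventually.of_forall ?_)
        intro s hs
        have hs1 : (1:ℝ) < s := hs
        have hs0 : (0:ℝ) < s := by linarith
        have hrp : s ^ (-2 : ℝ) = (s ^ 2)⁻¹ := by
          rw [Real.rpow_neg hs0.le, show ((2:ℝ) = ((2:ℕ):ℝ)) by norm_num, Real.rpow_natCast]
        have hinv : (lam + s)⁻¹ ≤ s⁻¹ := inv_anti₀ hs0 (by linarith)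
        have hinv0 : 0 ≤ (lam + s)⁻¹ := by positivity
        have hsinv0 : 0 ≤ s⁻¹ := by positivity
        rw [Real.norm_eq_abs, abs_of_nonneg (by positivity), hrp]
        have key : (lam + s)⁻¹ ^ 2 ≤ (s ^ 2)⁻¹ := by
          rw [← inv_pow]
          exact pow_le_pow_left₀ hinv0 hinv 2
        calc 27 * (lam + s)⁻¹ ^ 2 / c0 ≤ 27 * (s ^ 2)⁻¹ / c0 :=
              div_le_div₀ (by positivity) (by nlinarith) hc0 le_rfl
        _ = 27 / c0 * (s ^ 2)⁻¹ := by ring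
    have := h1.union h2
    rwa [Set.Ioc_union_Ioi_eq_Ioi (by norm_num : (0:ℝ) ≤ 1)] at this
  -- continuity of the integrand on `Ioi 0`
  have hcontres : ∀ a b, ContinuousOn (fun s => res B s a b) (Set.Ioi 0) := by
    intro a b
    apply ContinuousOn.congr (f := fun s => ∑ k, U a k * (μ k + s)⁻¹ * U b k)
    · apply continuousOn_finset_sum
      intro k _
      refine (continuousOn_const.mul (ContinuousOn.inv₀
        ((continuous_const.add continuous_id).continuousOn) ?_)).mul continuousOn_const
      intro s hs
      have : (0:ℝ) < s := hs
      have := hμ k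
      have h' : (0:ℝ) < μ k + s := by linarith
      simpa using h'.ne'
    · intro s hs
      exact hresE s (le_of_lt hs) a b
  have hcontsqrt : ContinuousOn (fun s : ℝ => Real.sqrt (B + s • (1 : Mat3)).det) (Set.Ioi (0:ℝ)) := by
    have base : ContinuousOn (fun s : ℝ => Real.sqrt (∏ k, (μ k + s))) (Set.Ioi 0) := by
      apply Real.continuous_sqrt.comp_continuousOn
      apply continuousOn_finset_prod
      intro k _
      exact (continuous_const.add continuous_id).continuousOn
    exact ContinuousOn.congr base (fun s _ => congrArg Real.sqrt (hdet s))
  have hconth : ∀ i j k l, ContinuousOn (h i j k l) (Set.Ioi 0) := by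
    intro i j k l
    rw [hhdef]
    apply ContinuousOn.div
    · simp only [symmetrize, otimes]
      apply ContinuousOn.div_const
      apply continuousOn_finset_sum
      intro σ _
      exact (hcontres _ _).mul (hcontres _ _)
    · exact hcontsqrt
    · intro s hs
      exact ne_of_gt (hdetpos s (le_of_lt hs))
  have hInt : ∀ i j k l, IntegrableOn (h i j k l) (Set.Ioi 0) := by
    intro i j k l
    apply Integrable.mono' hgint
      (((hconth i j k l).aestronglyMeasurable measurableSet_Ioi))
    refine (ae_restrict_iff' measurableSet_Ioi).2 (Filter.Eventually.of_forall ?_)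
    intro s hs
    rw [Real.norm_eq_abs]
    exact hhbd i j k l s (le_of_lt hs)
  -- interchange of finite sums and integrals
  have interchange : ∀ (f : Fin 3 → Fin 3 → Fin 3 → Fin 3 → ℝ → ℝ),
      (∀ i j k l, Integrable (f i j k l) (volume.restrict (Set.Ioi 0))) →
      (∫ s in Set.Ioi (0:ℝ), ∑ i, ∑ j, ∑ k, ∑ l, f i j k l s)
        = ∑ i, ∑ j, ∑ k, ∑ l, ∫ s in Set.Ioi (0:ℝ), f i j k l s := by
    intro f hf
    rw [integral_finset_sum _ (fun i _ => integrable_finset_sum _ (fun j _ =>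
      integrable_finset_sum _ (fun k _ => integrable_finset_sum _ (fun l _ => hf i j k l))))]
    refine Finset.sum_congr rfl fun i _ => ?_
    rw [integral_finset_sum _ (fun j _ => integrable_finset_sum _ (fun k _ =>
      integrable_finset_sum _ (fun l _ => hf i j k l)))]
    refine Finset.sum_congr rfl fun j _ => ?_
    rw [integral_finset_sum _ (fun k _ => integrable_finset_sum _ (fun l _ => hf i j k l))]
    refine Finset.sum_congr rfl fun k _ => ?_
    rw [integral_finset_sum _ (fun l _ => hf i j k l)]
  -- Part 1: positive definiteness
  have part1 : ∀ M : Mat3, Mᵀ = M → M ≠ 0 → 0 < dcontr M (Ctens B) M := by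
    intro M hM hM0
    have hMsym : ∀ a b, M a b = M b a := by
      intro a b
      conv_rhs => rw [← hM]
      rfl
    set F : ℝ → ℝ := fun s => ∑ i, ∑ j, ∑ k, ∑ l, (M i j * (3/4) * M k l) * h i j k l s
      with hFdef
    have hI : ∀ i j k l : Fin 3,
        Integrable (fun s => (M i j * (3/4) * M k l) * h i j k l s)
          (volume.restrict (Set.Ioi 0)) :=
      fun i j k l => (hInt i j k l).const_mul _
    have heq : dcontr M (Ctens B) M = ∫ s in Set.Ioi (0:ℝ), F s := by
      rw [dcontr, hFdef]
      rw [interchange _ hI]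
      refine Finset.sum_congr rfl fun i _ => Finset.sum_congr rfl fun j _ =>
        Finset.sum_congr rfl fun k _ => Finset.sum_congr rfl fun l _ => ?_
      rw [MeasureTheory.integral_const_mul]
      show M i j * ((3/4) * ∫ s in Set.Ioi (0:ℝ), h i j k l s) * M k l = _
      ring
    have hFint : Integrable F (volume.restrict (Set.Ioi 0)) :=
      integrable_finset_sum _ (fun i _ => integrable_finset_sum _ (fun j _ =>
        integrable_finset_sum _ (fun k _ => integrable_finset_sum _ (fun l _ => hI i j k l))))
    have hFpos : ∀ s ∈ Set.Ioi (0:ℝ), 0 < F s := by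
      intro s hs
      have hs0 : (0:ℝ) < s := hs
      have hd := hdetpos s hs0.le
      have hterm : ∀ i j k l : Fin 3, (M i j * (3/4) * M k l) * h i j k l s
          = ((M i j * M k l) * (res B s i j * res B s k l + res B s i k * res B s j l
              + res B s i l * res B s j k)) / (4 * Real.sqrt (B + s • (1:Mat3)).det) := by
        intro i j k l
        show (M i j * (3/4) * M k l) *
          (symmetrize (otimes (res B s) (res B s)) i j k l
            / Real.sqrt (B + s • (1 : Mat3)).det) = _
        rw [symmetrize_otimes (res B s) (hressym s hs0.le) i j k l]
        field_simp
      have hF : F s = (∑ i, ∑ j, ∑ k, ∑ l, (M i j * M k l) *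
          (res B s i j * res B s k l + res B s i k * res B s j l
            + res B s i l * res B s j k)) / (4 * Real.sqrt (B + s • (1:Mat3)).det) := by
        rw [hFdef]
        simp only [hterm]
        simp only [← Finset.sum_div]
      rw [hF, key_alg U M (res B s) (fun k => (μ k + s)⁻¹) hMsym (hresE s hs0.le)]
      apply div_pos ?_ (by positivity)
      have hNex : ∃ a b, (∑ i, ∑ j, U i a * M i j * U j b) ≠ 0 := by
        by_contra hcon
        push_neg at hcon
        have hN : Uᵀ * M * U = 0 := by
          ext a b
          rw [UNU]
          simpa using hcon a b
        have hMcM : M = U * (Uᵀ * M * U) * Uᵀ := by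
          have e : U * (Uᵀ * M * U) * Uᵀ = (U * Uᵀ) * M * (U * Uᵀ) := by
            simp only [Matrix.mul_assoc]
          rw [e, hU1, Matrix.one_mul, Matrix.mul_one]
        rw [hN] at hMcM
        simp only [Matrix.mul_zero, Matrix.zero_mul] at hMcM
        exact hM0 hMcM
      obtain ⟨a, b, hab⟩ := hNex
      have hE2 : 0 < ∑ a, ∑ b, ((μ a + s)⁻¹ * (μ b + s)⁻¹) *
          (∑ i, ∑ j, U i a * M i j * U j b) ^ 2 := by
        apply Finset.sum_pos'
        · intro x _
          apply Finset.sum_nonneg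
          intro y _
          have hx := hμ x
          have hy := hμ y
          positivity
        · refine ⟨a, Finset.mem_univ a, ?_⟩
          apply Finset.sum_pos'
          · intro y _
            have hx := hμ a
            have hy := hμ y
            positivity
          · refine ⟨b, Finset.mem_univ b, ?_⟩
            have h1 : 0 < (μ a + s)⁻¹ := by have := hμ a; positivity
            have h2 : 0 < (μ b + s)⁻¹ := by have := hμ b; positivity
            have h3 : 0 < (∑ i, ∑ j, U i a * M i j * U j b) ^ 2 := by
              rw [pow_two]
              exact mul_self_pos.mpr hab
            exact mul_pos (mul_pos h1 h2) h3
      have hE1 : 0 ≤ (∑ i, ∑ j, M i j * res B s i j) ^ 2 := sq_nonneg _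
      linarith
    rw [heq]
    have hae : 0 ≤ᵐ[volume.restrict (Set.Ioi 0)] F :=
      (ae_restrict_iff' measurableSet_Ioi).2
        (Filter.Eventually.of_forall fun s hs => (hFpos s hs).le)
    rw [setIntegral_pos_iff_support_of_nonneg_ae hae hFint]
    have hsub : Set.Ioi (0:ℝ) ⊆ Function.support F := fun s hs => ne_of_gt (hFpos s hs)
    calc (0:ENNReal) < volume (Set.Ioi (0:ℝ)) := by simp [Real.volume_Ioi]
    _ ≤ volume (Function.support F ∩ Set.Ioi 0) :=
        measure_mono (fun s hs => ⟨hsub hs, hs⟩)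
  refine ⟨part1, ?_⟩
  -- Part 2: injectivity
  intro M hM N hN hMN
  simp only [Set.mem_setOf_eq] at hM hN
  simp only [] at hMN
  by_contra hne
  have hD0 : M - N ≠ 0 := sub_ne_zero.mpr hne
  have hDsym : (M - N)ᵀ = M - N := by rw [Matrix.transpose_sub, hM, hN]
  have hlin : contr (Ctens B) (M - N) = contr (Ctens B) M - contr (Ctens B) N := by
    ext i j
    simp [contr, Matrix.sub_apply, mul_sub, Finset.sum_sub_distrib]
  have hzero : contr (Ctens B) (M - N) = 0 := by
    rw [hlin, hMN, sub_self]
  have hdval : dcontr (M - N) (Ctens B) (M - N)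
      = ∑ i, ∑ j, (M - N) i j * (contr (Ctens B) (M - N)) i j := by
    rw [dcontr]
    refine Finset.sum_congr rfl fun i _ => Finset.sum_congr rfl fun j _ => ?_
    rw [contr]
    show _ = (M - N) i j * ∑ k, ∑ l, Ctens B i j k l * (M - N) k l
    rw [Finset.mul_sum]
    refine Finset.sum_congr rfl fun k _ => ?_
    rw [Finset.mul_sum]
    refine Finset.sum_congr rfl fun l _ => ?_
    ring
  have : dcontr (M - N) (Ctens B) (M - N) = 0 := by
    rw [hdval, hzero]
    simp
  have := part1 (M - N) hDsym hD0
  linarith
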